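/- For any continuously differentiable vector field v on a bounded domain Ω vanishing on the boundary, the EMAC trilinear form satisfies c(v,v,v) = 0, where c(u,v,w) = (2D(u)v, w) + ((∇·u)v, w) with (·,·) the L² inner product. -/

import Mathlib

open scoped BigOperators
open MeasureTheory

/-- Partial derivative of the `i`-th component of `u` in direction `j`. -/
noncomputable def pd1 {d : ℕ} (u : (Fin d → ℝ) → (Fin d → ℝ)) (i j : Fin d)
    (x : Fin d → ℝ) : ℝ :=
  fderiv ℝ (fun y => u y i) x (Pi.single j 1)

/-- The EMAC trilinear form `c(u,v,w) = (2D(u)v, w) + ((∇·u)v, w)`. -/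
noncomputable def emacC1 {d : ℕ} (Ω : Set (Fin d → ℝ))
    (u v w : (Fin d → ℝ) → (Fin d → ℝ)) : ℝ :=
  ∫ x in Ω,
    ((∑ i, ∑ j, (pd1 u i j x + pd1 u j i x) * v x j * w x i)
      + (∑ j, pd1 u j j x) * (∑ i, v x i * w x i))

section EmacAux

open Set Asymptotics Topology Filter

lemma emac_alg_id {m : ℕ} (p : Fin m → Fin m → ℝ) (w : Fin m → ℝ) :
    ((∑ i, ∑ j, (p i j + p j i) * w j * w i) + (∑ j, p j j) * (∑ i, w i * w i))
      = ∑ i, ((∑ k, w k * w k) * p i i + (∑ k, (w k * p k i + w k * p k i)) * w i) := by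
  have h1 : ∑ i : Fin m, ∑ j : Fin m, p i j * w j * w i
      = ∑ i : Fin m, ∑ j : Fin m, p j i * w i * w j := by exact Finset.sum_comm
  have h2 : ∑ i : Fin m, ∑ j : Fin m, p j i * w i * w j
      = ∑ i : Fin m, ∑ j : Fin m, p j i * w j * w i :=
    Finset.sum_congr rfl fun i _ => Finset.sum_congr rfl fun j _ => by ring
  have h3 : (∑ j : Fin m, p j j) * (∑ i : Fin m, w i * w i)
      = ∑ i : Fin m, (∑ k : Fin m, w k * w k) * p i i := by
    rw [Finset.sum_mul]
    exact Finset.sum_congr rfl fun i _ => by ring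
  simp only [add_mul, Finset.sum_add_distrib, h1, h2, h3]
  rw [add_comm]
  congr 1
  have h4 : ∑ i : Fin m, ∑ j : Fin m, p j i * w j * w i
      = ∑ x : Fin m, (∑ y : Fin m, w y * p y x) * w x :=
    Finset.sum_congr rfl fun i _ => by
      rw [Finset.sum_mul]; exact Finset.sum_congr rfl fun j _ => by ring
  rw [h4]

variable {d : ℕ}

noncomputable def Dv (v : (Fin d → ℝ) → (Fin d → ℝ)) (x : Fin d → ℝ) (i : Fin d) :
    (Fin d → ℝ) →L[ℝ] ℝ := fderiv ℝ (fun y => v y i) x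

open Classical in
noncomputable def f'v (Ω : Set (Fin d → ℝ)) (v : (Fin d → ℝ) → (Fin d → ℝ))
    (x : Fin d → ℝ) : (Fin d → ℝ) →L[ℝ] (Fin d → ℝ) :=
  if x ∈ Ω then ((∑ i, v x i * v x i) • ContinuousLinearMap.pi (fun i => Dv v x i)
    + (∑ i, (v x i • Dv v x i + v x i • Dv v x i)).smulRight (v x)) else 0

noncomputable def Fv (Ω : Set (Fin d → ℝ)) (v : (Fin d → ℝ) → (Fin d → ℝ)) :
    (Fin d → ℝ) → (Fin d → ℝ) :=
  (closure Ω).indicator (fun x => (∑ i, v x i * v x i) • v x)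

variable {Ω : Set (Fin d → ℝ)} {v : (Fin d → ℝ) → (Fin d → ℝ)}

theorem continuousOn_vv (hv : ∀ i, ContDiffOn ℝ 1 (fun x => v x i) (closure Ω)) :
    ContinuousOn v (closure Ω) :=
  continuousOn_pi.2 fun i => (hv i).continuousOn

theorem continuousOn_Sv (hv : ∀ i, ContDiffOn ℝ 1 (fun x => v x i) (closure Ω)) :
    ContinuousOn (fun x => ∑ i, v x i * v x i) (closure Ω) := by
  apply continuousOn_finset_sum
  exact fun i _ => ((hv i).continuousOn).mul ((hv i).continuousOn)

theorem continuous_Fv (hv : ∀ i, ContDiffOn ℝ 1 (fun x => v x i) (closure Ω))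
    (hbc : ∀ x ∈ frontier Ω, v x = 0) : Continuous (Fv Ω v) := by
  classical
  rw [← continuousOn_univ]
  have : Fv Ω v = fun x => if x ∈ closure Ω then (∑ i, v x i * v x i) • v x else 0 := by
    funext x; simp [Fv, Set.indicator_apply]
  rw [this]
  apply ContinuousOn.if
  · intro a ha
    have hfr : a ∈ frontier Ω := by
      have h1 : frontier {a | a ∈ closure Ω} = frontier (closure Ω) := rfl
      have h2 : a ∈ frontier (closure Ω) := by rw [← h1]; exact ha.2
      exact frontier_closure_subset h2
    simp [hbc a hfr]
  · have hcl : closure {a | a ∈ closure Ω} = closure Ω := closure_closure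
    rw [univ_inter, hcl]
    exact (continuousOn_Sv hv).smul (continuousOn_vv hv)
  · exact continuousOn_const

theorem hasFDerivAt_Fv (hΩo : IsOpen Ω)
    (hv : ∀ i, ContDiffOn ℝ 1 (fun x => v x i) (closure Ω))
    (hbc : ∀ x ∈ frontier Ω, v x = 0) (x : Fin d → ℝ) :
    HasFDerivAt (Fv Ω v) (f'v Ω v x) x := by
  classical
  have hsub : Ω ⊆ closure Ω := subset_closure
  by_cases hx : x ∈ Ω
  · have hnhds : closure Ω ∈ 𝓝 x := Filter.mem_of_superset (hΩo.mem_nhds hx) hsub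
    have hdiff : ∀ i, HasFDerivAt (fun y => v y i) (Dv v x i) x := fun i =>
      (((hv i).differentiableOn one_ne_zero x (hsub hx)).differentiableAt hnhds).hasFDerivAt
    have hv' : HasFDerivAt v (ContinuousLinearMap.pi fun i => Dv v x i) x :=
      hasFDerivAt_pi.2 hdiff
    have hSd : HasFDerivAt (fun y => ∑ i, v y i * v y i)
        (∑ i, (v x i • Dv v x i + v x i • Dv v x i)) x :=
      HasFDerivAt.fun_sum fun i _ => (hdiff i).mul (hdiff i)
    have hGd : HasFDerivAt (fun y => (∑ i, v y i * v y i) • v y) (f'v Ω v x) x := by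
      rw [f'v, if_pos hx]
      exact hSd.smul hv'
    apply hGd.congr_of_eventuallyEq
    filter_upwards [hΩo.mem_nhds hx] with y hy
    exact Set.indicator_of_mem (hsub hy) _
  by_cases hxc : x ∈ closure Ω
  · have hfr : x ∈ frontier Ω := ⟨hxc, by rwa [hΩo.interior_eq]⟩
    have hvx : v x = 0 := hbc x hfr
    have hFx : Fv Ω v x = 0 := by simp [Fv, Set.indicator_of_mem hxc, hvx]
    have hf'x : f'v Ω v x = 0 := by rw [f'v, if_neg hx]
    rw [hf'x, hasFDerivAt_iff_isLittleO]
    simp only [hFx, sub_zero, ContinuousLinearMap.zero_apply]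
    rw [← nhdsWithin_univ, ← Set.union_compl_self (closure Ω), nhdsWithin_union,
      isLittleO_sup]
    constructor
    · have hFG : Fv Ω v =ᶠ[𝓝[closure Ω] x] fun y => (∑ i, v y i * v y i) • v y := by
        filter_upwards [self_mem_nhdsWithin] with y hy
        exact Set.indicator_of_mem hy _
      have hGo : (fun y => (∑ i, v y i * v y i) • v y) =o[𝓝[closure Ω] x]
          fun y => y - x := by
        rw [isLittleO_pi]
        intro j
        have hA : Filter.Tendsto (fun y => ∑ i, v y i * v y i) (𝓝[closure Ω] x) (𝓝 0) := by
          have hc : ContinuousWithinAt (fun y => ∑ i, v y i * v y i) (closure Ω) x := by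
            apply continuousOn_finset_sum Finset.univ
              (fun i _ => ((hv i).continuousOn.mul (hv i).continuousOn)) x hxc
          have h0 : (∑ i, v x i * v x i) = 0 := by simp [hvx]
          simpa [ContinuousWithinAt, h0] using hc
        have hAo : (fun y => ∑ i, v y i * v y i) =o[𝓝[closure Ω] x] (fun _ => (1 : ℝ)) :=
          (Asymptotics.isLittleO_one_iff ℝ).2 hA
        have hB : (fun y => v y j) =O[𝓝[closure Ω] x] fun y => ‖y - x‖ := by
          have hw := ((hv j).differentiableOn one_ne_zero x hxc).hasFDerivWithinAt
          have hBO := hw.isBigO_sub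
          have hvxj : v x j = 0 := congrFun hvx j
          simp only [hvxj, sub_zero] at hBO
          exact hBO.norm_right
        have := hAo.mul_isBigO hB
        simp only [one_mul] at this
        simp only [Pi.smul_apply, smul_eq_mul]
        exact isLittleO_norm_right.1 this
      exact hGo.congr' hFG.symm Filter.EventuallyEq.rfl
    · have h0 : Fv Ω v =ᶠ[𝓝[(closure Ω)ᶜ] x] fun _ => (0 : Fin d → ℝ) := by
        filter_upwards [self_mem_nhdsWithin] with y hy
        exact Set.indicator_of_notMem hy _
      exact (Asymptotics.isLittleO_zero _ _).congr' h0.symm Filter.EventuallyEq.rfl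
  · have hf'x : f'v Ω v x = 0 := by rw [f'v, if_neg hx]
    rw [hf'x]
    have h0 : Fv Ω v =ᶠ[𝓝 x] fun _ => (0 : Fin d → ℝ) := by
      filter_upwards [isClosed_closure.isOpen_compl.mem_nhds hxc] with y hy
      exact Set.indicator_of_notMem hy _
    exact (hasFDerivAt_const (0 : Fin d → ℝ) x).congr_of_eventuallyEq h0

theorem bound_v (hΩb : Bornology.IsBounded Ω)
    (hv : ∀ i, ContDiffOn ℝ 1 (fun x => v x i) (closure Ω)) :
    ∃ K, 0 ≤ K ∧ ∀ x ∈ closure Ω, ∀ i, |v x i| ≤ K := by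
  have hcomp : IsCompact (closure Ω) := hΩb.isCompact_closure
  choose C hC using fun i => hcomp.exists_bound_of_continuousOn (hv i).continuousOn
  refine ⟨∑ i, |C i|, Finset.sum_nonneg fun i _ => abs_nonneg _, fun x hx i => ?_⟩
  calc |v x i| ≤ C i := hC i x hx
    _ ≤ |C i| := le_abs_self _
    _ ≤ ∑ k, |C k| := Finset.single_le_sum (fun k _ => abs_nonneg (C k)) (Finset.mem_univ i)

theorem bound_D (hΩo : IsOpen Ω) (hΩb : Bornology.IsBounded Ω)
    (hv : ∀ i, ContDiffOn ℝ 1 (fun x => v x i) (closure Ω)) :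
    ∃ M, 0 ≤ M ∧ ∀ x ∈ Ω, ∀ i, ‖Dv v x i‖ ≤ M := by
  classical
  have hcomp : IsCompact (closure Ω) := hΩb.isCompact_closure
  have hsub : Ω ⊆ closure Ω := subset_closure
  have key : ∀ i : Fin d, ∃ M, 0 ≤ M ∧ ∀ x ∈ Ω, ‖Dv v x i‖ ≤ M := by
    intro i
    have loc : ∀ z ∈ closure Ω, ∃ w : Set (Fin d → ℝ), IsOpen w ∧ z ∈ w ∧
        ∃ M, ∀ x ∈ w ∩ Ω, ‖Dv v x i‖ ≤ M := by
      intro z hz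
      have h1 : ContDiffWithinAt ℝ ((0 : WithTop ℕ∞) + 1) (fun y => v y i) (closure Ω) z := by
        simpa using (hv i) z hz
      obtain ⟨u, hu, -, g, hgd, hgc⟩ :=
        (contDiffWithinAt_succ_iff_hasFDerivWithinAt (by simp)).1 h1
      rw [insert_eq_of_mem hz] at hu
      obtain ⟨w1, hw1o, hzw1, hw1⟩ := mem_nhdsWithin.1 hu
      have hgcz : ContinuousWithinAt g u z := hgc.continuousWithinAt
      have hev : ∀ᶠ y in 𝓝[u] z, ‖g y‖ < ‖g z‖ + 1 :=
        hgcz.norm.eventually_lt_const (lt_add_one _)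
      obtain ⟨w2, hw2o, hzw2, hw2⟩ := mem_nhdsWithin.1 hev
      refine ⟨w1 ∩ w2, hw1o.inter hw2o, ⟨hzw1, hzw2⟩, ‖g z‖ + 1, ?_⟩
      rintro x ⟨⟨hx1, hx2⟩, hxΩ⟩
      have hxu : x ∈ u := hw1 ⟨hx1, hsub hxΩ⟩
      have hmono : w1 ∩ Ω ⊆ u := fun y hy => hw1 ⟨hy.1, hsub hy.2⟩
      have hfd : HasFDerivAt (fun y => v y i) (g x) x :=
        ((hgd x hxu).mono hmono).hasFDerivAt ((hw1o.inter hΩo).mem_nhds ⟨hx1, hxΩ⟩)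
      have : Dv v x i = g x := hfd.fderiv
      rw [this]
      exact le_of_lt (hw2 ⟨hx2, hxu⟩)
    choose! w hwo hwz M hM using loc
    have hcover : closure Ω ⊆ ⋃ z ∈ closure Ω, w z := fun z hz =>
      Set.mem_biUnion hz (hwz z hz)
    obtain ⟨b', hb'sub, hb'fin, hb'⟩ :=
      hcomp.elim_finite_subcover_image (fun z hz => hwo z hz) hcover
    refine ⟨∑ z ∈ hb'fin.toFinset, |M z|,
      Finset.sum_nonneg fun z _ => abs_nonneg _, fun x hx => ?_⟩
    obtain ⟨z, hzb', hxw⟩ := Set.mem_iUnion₂.1 (hb' (hsub hx))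
    calc ‖Dv v x i‖ ≤ M z := hM z (hb'sub hzb') x ⟨hxw, hx⟩
      _ ≤ |M z| := le_abs_self _
      _ ≤ ∑ z' ∈ hb'fin.toFinset, |M z'| :=
        Finset.single_le_sum (fun z' _ => abs_nonneg (M z'))
          (hb'fin.mem_toFinset.2 hzb')
  choose Mi hMi0 hMi using key
  refine ⟨∑ i, |Mi i|, Finset.sum_nonneg fun i _ => abs_nonneg _, fun x hx i => ?_⟩
  calc ‖Dv v x i‖ ≤ Mi i := hMi i x hx
    _ ≤ |Mi i| := le_abs_self _
    _ ≤ ∑ k, |Mi k| := Finset.single_le_sum (fun k _ => abs_nonneg (Mi k)) (Finset.mem_univ i)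

theorem psi_off (x : Fin d → ℝ) (hx : x ∉ Ω) :
    ∑ i, (f'v Ω v x) (Pi.single i 1) i = 0 := by
  simp [f'v, if_neg hx]

theorem psi_on (x : Fin d → ℝ) (hx : x ∈ Ω) :
    ∑ i, (f'v Ω v x) (Pi.single i 1) i
      = ∑ i, ((∑ k, v x k * v x k) * pd1 v i i x
          + (∑ k, (v x k * pd1 v k i x + v x k * pd1 v k i x)) * v x i) := by
  refine Finset.sum_congr rfl fun i _ => ?_
  rw [f'v, if_pos hx]
  simp [ContinuousLinearMap.add_apply, ContinuousLinearMap.smul_apply,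
    ContinuousLinearMap.pi_apply, ContinuousLinearMap.smulRight_apply,
    ContinuousLinearMap.sum_apply, Pi.add_apply, Pi.smul_apply, smul_eq_mul,
    pd1, Dv]

theorem integrable_psi (hΩo : IsOpen Ω) (hΩb : Bornology.IsBounded Ω)
    (hv : ∀ i, ContDiffOn ℝ 1 (fun x => v x i) (closure Ω)) :
    Integrable (fun x => ∑ i, (f'v Ω v x) (Pi.single i 1) i) := by
  classical
  have hsub : Ω ⊆ closure Ω := subset_closure
  have heq : (fun x => ∑ i, (f'v Ω v x) (Pi.single i 1) i)
      = Ω.indicator (fun x => ∑ i, (f'v Ω v x) (Pi.single i 1) i) := by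
    funext x
    by_cases hx : x ∈ Ω
    · rw [Set.indicator_of_mem hx]
    · rw [Set.indicator_of_notMem hx, psi_off x hx]
  rw [heq]
  apply IntegrableOn.integrable_indicator _ hΩo.measurableSet
  have hvm : ∀ i, AEStronglyMeasurable (fun x => v x i) (volume.restrict Ω) := fun i =>
    ((hv i).continuousOn.mono hsub).aestronglyMeasurable hΩo.measurableSet
  have hDm : ∀ i j, AEStronglyMeasurable (fun x => (Dv v x i) (Pi.single j 1))
      (volume.restrict Ω) := fun i j =>
    (measurable_fderiv_apply_const ℝ _ _).aestronglyMeasurable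
  constructor
  · apply AEStronglyMeasurable.congr
      (f := fun x => ∑ i, ((∑ k, v x k * v x k) * pd1 v i i x
          + (∑ k, (v x k * pd1 v k i x + v x k * pd1 v k i x)) * v x i))
    · apply Finset.aestronglyMeasurable_fun_sum
      intro i _
      exact ((Finset.aestronglyMeasurable_fun_sum _ fun k _ => (hvm k).mul (hvm k)).mul
          (hDm i i)).add
        ((Finset.aestronglyMeasurable_fun_sum _ fun k _ =>
          ((hvm k).mul (hDm k i)).add ((hvm k).mul (hDm k i))).mul (hvm i))
    · rw [Filter.eventuallyEq_iff_exists_mem]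
      refine ⟨Ω, self_mem_ae_restrict hΩo.measurableSet, fun x hx => (psi_on x hx).symm⟩
  · haveI : IsFiniteMeasure (volume.restrict Ω) :=
      ⟨by rw [Measure.restrict_apply_univ]; exact hΩb.measure_lt_top⟩
    obtain ⟨K, hK0, hK⟩ := bound_v hΩb hv
    obtain ⟨M, hM0, hM⟩ := bound_D hΩo hΩb hv
    have hpd : ∀ x ∈ Ω, ∀ i j, |pd1 v i j x| ≤ M := by
      intro x hx i j
      have h1 : |pd1 v i j x| ≤ ‖Dv v x i‖ * ‖(Pi.single j 1 : Fin d → ℝ)‖ :=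
        (Dv v x i).le_opNorm _
      have h2 : ‖(Pi.single j 1 : Fin d → ℝ)‖ = 1 := by
        rw [Pi.norm_single]; exact norm_one
      rw [h2, mul_one] at h1
      exact h1.trans (hM x hx i)
    have habs : ∀ (f : Fin d → ℝ) (c : ℝ), (∀ k, |f k| ≤ c) → |∑ k, f k| ≤ d * c := by
      intro f c h
      calc |∑ k, f k| ≤ ∑ k, |f k| := Finset.abs_sum_le_sum_abs _ _
        _ ≤ ∑ _k : Fin d, c := Finset.sum_le_sum fun k _ => h k
        _ = d * c := by simp [Finset.sum_const, Finset.card_univ, nsmul_eq_mul]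
    apply HasFiniteIntegral.of_bounded
      (C := d * ((d * (K * K)) * M + (d * (K * M + K * M)) * K))
    rw [Filter.eventually_iff_exists_mem]
    refine ⟨Ω, self_mem_ae_restrict hΩo.measurableSet, fun x hx => ?_⟩
    rw [Real.norm_eq_abs, psi_on x hx]
    apply habs
    intro i
    have hKx : ∀ k, |v x k| ≤ K := hK x (hsub hx)
    have hS : |∑ k, v x k * v x k| ≤ d * (K * K) := by
      apply habs; intro k
      rw [abs_mul]
      exact mul_le_mul (hKx k) (hKx k) (abs_nonneg _) hK0
    have hC : |∑ k, (v x k * pd1 v k i x + v x k * pd1 v k i x)| ≤ d * (K * M + K * M) := by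
      apply habs; intro k
      have h1 : |v x k * pd1 v k i x| ≤ K * M := by
        rw [abs_mul]
        exact mul_le_mul (hKx k) (hpd x hx k i) (abs_nonneg _) hK0
      calc |v x k * pd1 v k i x + v x k * pd1 v k i x|
          ≤ |v x k * pd1 v k i x| + |v x k * pd1 v k i x| := abs_add_le _ _
        _ ≤ K * M + K * M := add_le_add h1 h1
    calc |(∑ k, v x k * v x k) * pd1 v i i x
          + (∑ k, (v x k * pd1 v k i x + v x k * pd1 v k i x)) * v x i|
        ≤ |(∑ k, v x k * v x k) * pd1 v i i x|
          + |(∑ k, (v x k * pd1 v k i x + v x k * pd1 v k i x)) * v x i| := abs_add_le _ _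
      _ ≤ (d * (K * K)) * M + (d * (K * M + K * M)) * K := by
          apply add_le_add
          · rw [abs_mul]
            exact mul_le_mul hS (hpd x hx i i) (abs_nonneg _)
              (by positivity)
          · rw [abs_mul]
            exact mul_le_mul hC (hKx i) (abs_nonneg _) (by positivity)

end EmacAux

section EmacMain

open Set Topology

theorem emac_aux (n : ℕ) (Ω : Set (Fin (n + 1) → ℝ)) (hΩo : IsOpen Ω)
    (hΩb : Bornology.IsBounded Ω) (v : (Fin (n + 1) → ℝ) → (Fin (n + 1) → ℝ))
    (hv : ∀ i, ContDiffOn ℝ 1 (fun x => v x i) (closure Ω))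
    (hbc : ∀ x ∈ frontier Ω, v x = 0) :
    emacC1 Ω v v v = 0 := by
  classical
  have hsub : Ω ⊆ closure Ω := subset_closure
  obtain ⟨R0, hR0⟩ := hΩb.closure.subset_closedBall 0
  set R := max R0 0 with hRdef
  have hRsub : closure Ω ⊆ Metric.closedBall 0 R :=
    hR0.trans (Metric.closedBall_subset_closedBall (le_max_left _ _))
  have hR0' : (0 : ℝ) ≤ R := le_max_right _ _
  set a : Fin (n + 1) → ℝ := fun _ => -(R + 1) with ha
  set b : Fin (n + 1) → ℝ := fun _ => R + 1 with hb
  have hab : a ≤ b := fun i => by simp only [ha, hb]; linarith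
  have hnorm : ∀ z ∈ closure Ω, ∀ i, |z i| ≤ R := by
    intro z hz i
    have h1 : ‖z‖ ≤ R := mem_closedBall_zero_iff.1 (hRsub hz)
    calc |z i| = ‖z i‖ := (Real.norm_eq_abs _).symm
      _ ≤ ‖z‖ := norm_le_pi_norm z i
      _ ≤ R := h1
  have hΩab : Ω ⊆ Icc a b := by
    intro z hz
    rw [Set.mem_Icc]
    constructor <;> intro i <;>
      · have := abs_le.1 (hnorm z (hsub hz) i)
        simp only [ha, hb]
        linarith [this.1, this.2]
  have hFd := hasFDerivAt_Fv hΩo hv hbc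
  have hFc : ContinuousOn (Fv Ω v) (Icc a b) := (continuous_Fv hv hbc).continuousOn
  have hInt := integrable_psi hΩo hΩb hv
  have hdiv := MeasureTheory.integral_divergence_of_hasFDerivAt_off_countable
    (a := a) (b := b) hab (Fv Ω v) (f'v Ω v) ∅ Set.countable_empty hFc (fun x _ => hFd x)
    hInt.integrableOn
  have hface : ∀ (i : Fin (n + 1)) (c : ℝ), R < |c| → ∀ y : Fin n → ℝ,
      Fv Ω v (i.insertNth c y) = 0 := by
    intro i c hc y
    apply Set.indicator_of_notMem
    intro hmem
    have := hnorm _ hmem i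
    rw [Fin.insertNth_apply_same] at this
    linarith
  have hrhs : (∑ i : Fin (n + 1),
      ((∫ x in Icc (a ∘ i.succAbove) (b ∘ i.succAbove), Fv Ω v (i.insertNth (b i) x) i) -
       ∫ x in Icc (a ∘ i.succAbove) (b ∘ i.succAbove), Fv Ω v (i.insertNth (a i) x) i)) = 0 := by
    apply Finset.sum_eq_zero
    intro i _
    have h1 : ∀ y : Fin n → ℝ, Fv Ω v (i.insertNth (b i) y) i = 0 := by
      intro y
      have hbi : b i = R + 1 := rfl
      rw [hface i (b i) (by rw [hbi, abs_of_nonneg (by linarith)]; linarith) y]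
      rfl
    have h2 : ∀ y : Fin n → ℝ, Fv Ω v (i.insertNth (a i) y) i = 0 := by
      intro y
      have hai : a i = -(R + 1) := rfl
      rw [hface i (a i) (by rw [hai, abs_neg, abs_of_nonneg (by linarith)]; linarith) y]
      rfl
    simp [h1, h2]
  have key : (∫ x in Icc a b, ∑ i, (f'v Ω v x) (Pi.single i 1) i) = 0 := by
    rw [hdiv, hrhs]
  have h1 : emacC1 Ω v v v = ∫ x in Ω, ∑ i, (f'v Ω v x) (Pi.single i 1) i := by
    rw [emacC1]
    apply MeasureTheory.setIntegral_congr_fun hΩo.measurableSet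
    intro x hx
    exact (emac_alg_id (fun i j => pd1 v i j x) (v x)).trans (psi_on x hx).symm
  have h2 : (∫ x in Ω, ∑ i, (f'v Ω v x) (Pi.single i 1) i)
      = ∫ x in Icc a b, ∑ i, (f'v Ω v x) (Pi.single i 1) i :=
    (MeasureTheory.setIntegral_eq_of_subset_of_forall_diff_eq_zero measurableSet_Icc hΩab
      (fun x hx => psi_off x hx.2)).symm
  rw [h1, h2, key]

end EmacMain

/-- `c(v,v,v) = 0` for C¹ fields vanishing on the boundary. -/
theorem emac_trilinear_self_zero (d : ℕ) (hd : d = 2 ∨ d = 3)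
    (Ω : Set (Fin d → ℝ)) (hΩo : IsOpen Ω) (hΩb : Bornology.IsBounded Ω)
    (v : (Fin d → ℝ) → (Fin d → ℝ))
    (hv : ∀ i, ContDiffOn ℝ 1 (fun x => v x i) (closure Ω))
    (hbc : ∀ x ∈ frontier Ω, v x = 0) :
    emacC1 Ω v v v = 0 := by
  rcases hd with rfl | rfl
  · exact emac_aux 1 Ω hΩo hΩb v hv hbc
  · exact emac_aux 2 Ω hΩo hΩb v hv hbc
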